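/- Let x and y be words. If a power x^m of x and a power y^n of y have a common factor of length at least |x| + |y| - gcd(|x|, |y|), then there exist words t1 and t2 such that x is a power of t1·t2 and y is a power of t2·t1. -/

import Mathlib

/-- n-fold power of a word (list) under concatenation. -/
def wpow {α : Type*} (u : List α) (n : ℕ) : List α := (List.replicate n u).flatten

section FWAux

variable {α : Type*} {β : Type*}

theorem wpow_zero (u : List α) : wpow u 0 = [] := rfl

theorem wpow_succ (u : List α) (n : ℕ) : wpow u (n + 1) = u ++ wpow u n := by
  simp [wpow, List.replicate_succ]

theorem wpow_one (u : List α) : wpow u 1 = u := by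
  simp [wpow_succ, wpow_zero]

theorem wpow_add (u : List α) (m n : ℕ) : wpow u (m + n) = wpow u m ++ wpow u n := by
  induction m with
  | zero => simp [wpow_zero]
  | succ k ih => rw [Nat.succ_add, wpow_succ, wpow_succ, ih, List.append_assoc]

theorem wpow_length (u : List α) (n : ℕ) : (wpow u n).length = n * u.length := by
  induction n with
  | zero => simp [wpow_zero]
  | succ k ih => rw [wpow_succ, List.length_append, ih, Nat.succ_mul]; omega

theorem reduce_mod (a N : ℕ) (ha : 0 < a) (w : ℕ → β)
    (pa : ∀ i, i + a < N → w (i + a) = w i) :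
    ∀ i, i < N → w i = w (i % a) := by
  intro i
  induction i using Nat.strong_induction_on with
  | _ i ih =>
    intro hi
    rcases lt_or_ge i a with h | h
    · rw [Nat.mod_eq_of_lt h]
    · have h1 : i - a + a = i := Nat.sub_add_cancel h
      have h2 := pa (i - a) (by omega)
      rw [h1] at h2
      rw [h2, ih (i - a) (by omega) (by omega)]
      congr 1
      conv_rhs => rw [← h1]
      rw [Nat.add_mod_right]

theorem fw (a b N : ℕ) (ha : 0 < a) (hb : 0 < b) (w : ℕ → β)
    (hN : a + b - Nat.gcd a b ≤ N)
    (pa : ∀ i, i + a < N → w (i + a) = w i)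
    (pb : ∀ i, i + b < N → w (i + b) = w i) :
    ∀ i j, i < N → j < N → i % Nat.gcd a b = j % Nat.gcd a b → w i = w j := by
  rcases lt_trichotomy a b with hab | hab | hab
  · -- a < b
    have hg : Nat.gcd a (b - a) = Nat.gcd a b := Nat.gcd_sub_self_right hab.le
    have hgb : Nat.gcd a b ≤ b := Nat.le_of_dvd hb (Nat.gcd_dvd_right a b)
    have hba : Nat.gcd a b ≤ b - a := by
      refine Nat.le_of_dvd (by omega) ?_
      rw [← hg]; exact Nat.gcd_dvd_right a (b - a)
    have h2a : 2 * a ≤ N := by omega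
    have inner := fw a (b - a) (N - a) ha (by omega) w
      (by rw [hg]; omega)
      (fun i hi => pa i (by omega))
      (by
        intro i hi
        have h1 := pa (i + (b - a)) (by omega)
        have h2 := pb i (by omega)
        have h3 : i + (b - a) + a = i + b := by omega
        rw [h3] at h1
        rw [← h1, h2])
    intro i j hi hj hmod
    rw [reduce_mod a N ha w pa i hi, reduce_mod a N ha w pa j hj]
    refine inner (i % a) (j % a) (lt_of_lt_of_le (Nat.mod_lt _ ha) (by omega))
      (lt_of_lt_of_le (Nat.mod_lt _ ha) (by omega)) ?_
    rw [hg, Nat.mod_mod_of_dvd _ (Nat.gcd_dvd_left a b),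
      Nat.mod_mod_of_dvd _ (Nat.gcd_dvd_left a b)]
    exact hmod
  · -- a = b
    subst hab
    intro i j hi hj hmod
    rw [reduce_mod a N ha w pa i hi, reduce_mod a N ha w pa j hj]
    rw [Nat.gcd_self] at hmod
    rw [hmod]
  · -- b < a
    intro i j hi hj hmod
    exact fw b a N hb ha w (by rw [Nat.gcd_comm, Nat.add_comm]; exact hN) pb pa i j hi hj
      (by rwa [Nat.gcd_comm])
termination_by a + a + b
decreasing_by
  all_goals omega

theorem wpow_getElem? (x : List α) (k j : ℕ) (hj : j < k * x.length) :
    getElem? (wpow x k) (j) = getElem? x (j % x.length) := by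
  induction k generalizing j with
  | zero => simp at hj
  | succ k ih =>
    rw [wpow_succ]
    rcases lt_or_ge j x.length with h | h
    · rw [List.getElem?_append_left h, Nat.mod_eq_of_lt h]
    · have hm : (k + 1) * x.length = k * x.length + x.length := by ring
      rw [List.getElem?_append_right h, ih (j - x.length) (by omega)]
      congr 1
      have h1 : j = (j - x.length) + x.length := by omega
      conv_rhs => rw [h1]
      rw [Nat.add_mod_right]

theorem periodic_take (w : List α) (g : ℕ) (hg : 0 < g)
    (hper : ∀ i, i + g < w.length → getElem? w (i + g) = getElem? w (i)) :
    ∀ (e : ℕ), g * e ≤ w.length → w.take (g * e) = wpow (w.take g) e := by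
  intro e
  induction e generalizing w with
  | zero => simp [wpow_zero]
  | succ k ih =>
    intro he
    rcases Nat.eq_zero_or_pos k with rfl | hk
    · simp [wpow_one]
    have hmul : g * (k + 1) = g + g * k := by ring
    have hlen : g + g * k ≤ w.length := by omega
    have h2g : g + g ≤ w.length := by nlinarith
    have h1 : w.take (g * (k + 1)) = w.take g ++ (w.drop g).take (g * k) := by
      rw [hmul, List.take_add]
    have hper' : ∀ i, i + g < (w.drop g).length → getElem? (w.drop g) (i + g) = getElem? (w.drop g) (i) := by
      intro i hi
      rw [List.length_drop] at hi
      rw [List.getElem?_drop, List.getElem?_drop,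
        show g + (i + g) = (g + i) + g by omega]
      exact hper (g + i) (by omega)
    have hih := ih (w.drop g) hper' (by rw [List.length_drop]; omega)
    have heq : (w.drop g).take g = w.take g := by
      apply List.ext_getElem?
      intro i
      rcases lt_or_ge i g with h | h
      · rw [List.getElem?_take_of_lt h, List.getElem?_take_of_lt h, List.getElem?_drop,
          show g + i = i + g by omega]
        exact hper i (by omega)
      · rw [List.getElem?_eq_none, List.getElem?_eq_none]
        · rw [List.length_take]; omega
        · rw [List.length_take]; omega
    rw [h1, hih, heq, wpow_succ]

theorem rot_pow (u : List α) (j e : ℕ) :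
    wpow (u.drop j ++ u.take j) (e + 1) = u.drop j ++ wpow u e ++ u.take j := by
  induction e with
  | zero => simp [wpow_succ, wpow_zero]
  | succ k ih =>
    calc wpow (u.drop j ++ u.take j) (k + 1 + 1)
        = (u.drop j ++ u.take j) ++ (u.drop j ++ wpow u k ++ u.take j) := by
          rw [wpow_succ, ih]
      _ = u.drop j ++ ((u.take j ++ u.drop j) ++ wpow u k) ++ u.take j := by
          simp only [List.append_assoc]
      _ = u.drop j ++ (u ++ wpow u k) ++ u.take j := by rw [List.take_append_drop]
      _ = u.drop j ++ wpow u (k + 1) ++ u.take j := by rw [wpow_succ]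

theorem suffix_pow {u B A : List α} (hg : 0 < u.length) {e : ℕ}
    (h : B ++ A = wpow u e) (hA : A.length < u.length * e) :
    ∃ j ≤ u.length, A ++ B = wpow (u.drop j ++ u.take j) e := by
  set g := u.length with hgdef
  set s := A.length % g with hsdef
  set k := A.length / g with hkdef
  have hs : s < g := Nat.mod_lt _ hg
  have hdm : g * k + s = A.length := Nat.div_add_mod A.length g
  have hk : k < e := by
    rw [hkdef, Nat.div_lt_iff_lt_mul hg, Nat.mul_comm]
    exact hA
  refine ⟨g - s, Nat.sub_le _ _, ?_⟩
  have hdecomp : (wpow u (e - 1 - k) ++ u.take (g - s)) ++ (u.drop (g - s) ++ wpow u k)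
      = wpow u e := by
    calc (wpow u (e - 1 - k) ++ u.take (g - s)) ++ (u.drop (g - s) ++ wpow u k)
        = wpow u (e - 1 - k) ++ ((u.take (g - s) ++ u.drop (g - s)) ++ wpow u k) := by
          simp only [List.append_assoc]
      _ = wpow u (e - 1 - k) ++ (u ++ wpow u k) := by rw [List.take_append_drop]
      _ = wpow u (e - 1 - k) ++ wpow u (k + 1) := by rw [wpow_succ]
      _ = wpow u (e - 1 - k + (k + 1)) := (wpow_add u (e - 1 - k) (k + 1)).symm
      _ = wpow u e := by congr 1; omega
  have hlen : A.length = (u.drop (g - s) ++ wpow u k).length := by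
    rw [List.length_append, List.length_drop, wpow_length, ← hgdef, Nat.mul_comm k g]
    omega
  obtain ⟨hB, hA2⟩ := List.append_inj' (h.trans hdecomp.symm) hlen
  rw [hA2, hB]
  have he1 : 0 < e := Nat.pos_of_ne_zero (by rintro rfl; simp at hA)
  obtain ⟨e', rfl⟩ : ∃ e', e = e' + 1 := ⟨e - 1, by omega⟩
  rw [rot_pow]
  calc (u.drop (g - s) ++ wpow u k) ++ (wpow u (e' + 1 - 1 - k) ++ u.take (g - s))
      = u.drop (g - s) ++ (wpow u k ++ wpow u (e' + 1 - 1 - k)) ++ u.take (g - s) := by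
        simp only [List.append_assoc]
    _ = u.drop (g - s) ++ wpow u (k + (e' + 1 - 1 - k)) ++ u.take (g - s) := by
        rw [wpow_add]
    _ = u.drop (g - s) ++ wpow u e' ++ u.take (g - s) := by
        have h5 : k + (e' + 1 - 1 - k) = e' := by omega
        rw [h5]

theorem rot_take {x c : List α} {r : ℕ} (hr : r < x.length) (hxc : x.length ≤ c.length)
    (hA : ∀ i, i < c.length → getElem? c (i) = getElem? x ((r + i) % x.length)) :
    x.drop r ++ x.take r = c.take x.length := by
  apply List.ext_getElem?
  intro i
  rcases lt_or_ge i x.length with hia | hia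
  · have hrhs : getElem? (c.take x.length) (i) = getElem? x ((r + i) % x.length) := by
      rw [List.getElem?_take_of_lt hia]
      exact hA i (lt_of_lt_of_le hia hxc)
    rcases lt_or_ge i (x.length - r) with h | h
    · rw [List.getElem?_append_left (by rw [List.length_drop]; omega), List.getElem?_drop, hrhs]
      congr 1
      rw [Nat.mod_eq_of_lt (by omega)]
    · rw [List.getElem?_append_right (by rw [List.length_drop]; omega), hrhs,
        List.length_drop]
      have h1 : (r + i) % x.length = i - (x.length - r) := by
        rw [show r + i = (r + i - x.length) + x.length by omega, Nat.add_mod_right,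
          Nat.mod_eq_of_lt (by omega)]
        omega
      rw [h1]
      refine List.getElem?_take_of_lt ?_
      omega
  · rw [List.getElem?_eq_none, List.getElem?_eq_none]
    · rw [List.length_take]; omega
    · rw [List.length_append, List.length_drop, List.length_take]; omega

theorem rotpair (u : List α) (j1 j2 : ℕ) (h1 : j1 ≤ u.length) (h2 : j2 ≤ u.length) :
    ∃ t1 t2 : List α, u.drop j1 ++ u.take j1 = t1 ++ t2 ∧ u.drop j2 ++ u.take j2 = t2 ++ t1 := by
  rcases le_total j1 j2 with h | h
  · refine ⟨(u.take j2).drop j1, u.drop j2 ++ u.take j1, ?_, ?_⟩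
    · have key : u.drop j1 = (u.take j2).drop j1 ++ u.drop j2 := by
        conv_lhs => rw [← List.take_append_drop j2 u]
        rw [List.drop_append, List.length_take,
          show j1 - min j2 u.length = 0 by omega, List.drop_zero]
      rw [key, List.append_assoc]
    · have key : u.take j2 = u.take j1 ++ (u.take j2).drop j1 := by
        conv_lhs => rw [← List.take_append_drop j1 (u.take j2)]
        rw [List.take_take, min_eq_left h]
      conv_lhs => rw [key]
      simp only [List.append_assoc]
  · refine ⟨u.drop j1 ++ u.take j2, (u.take j1).drop j2, ?_, ?_⟩
    · have key : u.take j1 = u.take j2 ++ (u.take j1).drop j2 := by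
        conv_lhs => rw [← List.take_append_drop j2 (u.take j1)]
        rw [List.take_take, min_eq_left h]
      conv_lhs => rw [key]
      simp only [List.append_assoc]
    · have key : u.drop j2 = (u.take j1).drop j2 ++ u.drop j1 := by
        conv_lhs => rw [← List.take_append_drop j1 u]
        rw [List.drop_append, List.length_take,
          show j2 - min j1 u.length = 0 by omega, List.drop_zero]
      rw [key, List.append_assoc]

end FWAux

theorem fine_wilf_common_factor {α : Type*} (x y : List α) (m n : ℕ) (c : List α)
    (hcx : c <:+: wpow x m) (hcy : c <:+: wpow y n)
    (hlen : x.length + y.length - Nat.gcd x.length y.length ≤ c.length) :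
    ∃ (t1 t2 : List α) (p q : ℕ), x = wpow (t1 ++ t2) p ∧ y = wpow (t2 ++ t1) q := by
  rcases eq_or_ne x [] with rfl | hx
  · exact ⟨[], y, 0, 1, by simp [wpow_zero], by simp [wpow_one]⟩
  rcases eq_or_ne y [] with rfl | hy
  · exact ⟨x, [], 1, 0, by simp [wpow_one], by simp [wpow_zero]⟩
  have ha : 0 < x.length := List.length_pos_iff.mpr hx
  have hb : 0 < y.length := List.length_pos_iff.mpr hy
  have hga : Nat.gcd x.length y.length ∣ x.length := Nat.gcd_dvd_left _ _
  have hgb : Nat.gcd x.length y.length ∣ y.length := Nat.gcd_dvd_right _ _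
  have hga' : Nat.gcd x.length y.length ≤ x.length := Nat.le_of_dvd ha hga
  have hgb' : Nat.gcd x.length y.length ≤ y.length := Nat.le_of_dvd hb hgb
  have hg : 0 < Nat.gcd x.length y.length := Nat.gcd_pos_of_pos_left _ ha
  have haL : x.length ≤ c.length := by omega
  have hbL : y.length ≤ c.length := by omega
  obtain ⟨p, s, hps⟩ := hcx
  obtain ⟨p', s', hps'⟩ := hcy
  rw [List.append_assoc] at hps hps'
  have hrxa : p.length % x.length < x.length := Nat.mod_lt _ ha
  have hrya : p'.length % y.length < y.length := Nat.mod_lt _ hb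
  have hAx : ∀ i, i < c.length → getElem? c (i) = getElem? x ((p.length % x.length + i) % x.length) := by
    intro i hi
    have h1 := wpow_length x m
    have h2 : (p ++ (c ++ s)).length = p.length + (c.length + s.length) := by simp
    rw [hps, h1] at h2
    have hm : p.length + i < m * x.length := by omega
    calc getElem? c (i) = getElem? (c ++ s) (i) := (List.getElem?_append_left hi).symm
      _ = getElem? (p ++ (c ++ s)) (p.length + i) := by
          rw [List.getElem?_append_right (l₁ := p) (l₂ := c ++ s) (i := p.length + i) (by omega),
            Nat.add_sub_cancel_left]
      _ = getElem? (wpow x m) (p.length + i) := by rw [hps]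
      _ = getElem? x ((p.length + i) % x.length) := wpow_getElem? x m _ hm
      _ = getElem? x ((p.length % x.length + i) % x.length) := by rw [Nat.mod_add_mod]
  have hAy : ∀ i, i < c.length → getElem? c (i) = getElem? y ((p'.length % y.length + i) % y.length) := by
    intro i hi
    have h1 := wpow_length y n
    have h2 : (p' ++ (c ++ s')).length = p'.length + (c.length + s'.length) := by simp
    rw [hps', h1] at h2
    have hm : p'.length + i < n * y.length := by omega
    calc getElem? c (i) = getElem? (c ++ s') (i) := (List.getElem?_append_left hi).symm
      _ = getElem? (p' ++ (c ++ s')) (p'.length + i) := by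
          rw [List.getElem?_append_right (l₁ := p') (l₂ := c ++ s') (i := p'.length + i) (by omega),
            Nat.add_sub_cancel_left]
      _ = getElem? (wpow y n) (p'.length + i) := by rw [hps']
      _ = getElem? y ((p'.length + i) % y.length) := wpow_getElem? y n _ hm
      _ = getElem? y ((p'.length % y.length + i) % y.length) := by rw [Nat.mod_add_mod]
  have pa : ∀ i, i + x.length < c.length → getElem? c (i + x.length) = getElem? c (i) := by
    intro i h
    rw [hAx _ h, hAx i (by omega)]
    congr 1
    rw [show p.length % x.length + (i + x.length) = (p.length % x.length + i) + x.length by omega,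
      Nat.add_mod_right]
  have pb : ∀ i, i + y.length < c.length → getElem? c (i + y.length) = getElem? c (i) := by
    intro i h
    rw [hAy _ h, hAy i (by omega)]
    congr 1
    rw [show p'.length % y.length + (i + y.length) = (p'.length % y.length + i) + y.length by omega,
      Nat.add_mod_right]
  have pg : ∀ i, i + Nat.gcd x.length y.length < c.length →
      getElem? c (i + Nat.gcd x.length y.length) = getElem? c (i) := by
    intro i h
    exact fw x.length y.length c.length ha hb (fun k => getElem? c (k)) hlen pa pb
      (i + Nat.gcd x.length y.length) i (by omega) (by omega) (Nat.add_mod_right _ _)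
  have hgea : Nat.gcd x.length y.length * (x.length / Nat.gcd x.length y.length) = x.length :=
    Nat.mul_div_cancel' hga
  have hgeb : Nat.gcd x.length y.length * (y.length / Nat.gcd x.length y.length) = y.length :=
    Nat.mul_div_cancel' hgb
  have hca : c.take x.length = wpow (c.take (Nat.gcd x.length y.length))
      (x.length / Nat.gcd x.length y.length) := by
    conv_lhs => rw [← hgea]
    exact periodic_take c _ hg pg _ (by rw [hgea]; exact haL)
  have hcb : c.take y.length = wpow (c.take (Nat.gcd x.length y.length))
      (y.length / Nat.gcd x.length y.length) := by
    conv_lhs => rw [← hgeb]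
    exact periodic_take c _ hg pg _ (by rw [hgeb]; exact hbL)
  have hul : (c.take (Nat.gcd x.length y.length)).length = Nat.gcd x.length y.length := by
    rw [List.length_take]; omega
  have hXrot : x.drop (p.length % x.length) ++ x.take (p.length % x.length) = c.take x.length :=
    rot_take hrxa haL hAx
  have hYrot : y.drop (p'.length % y.length) ++ y.take (p'.length % y.length) = c.take y.length :=
    rot_take hrya hbL hAy
  obtain ⟨j1, hj1, hx1⟩ := suffix_pow (u := c.take (Nat.gcd x.length y.length))
    (B := x.drop (p.length % x.length)) (A := x.take (p.length % x.length))
    (by rw [hul]; exact hg) (hXrot.trans hca)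
    (by rw [List.length_take, hul, hgea]; omega)
  obtain ⟨j2, hj2, hy1⟩ := suffix_pow (u := c.take (Nat.gcd x.length y.length))
    (B := y.drop (p'.length % y.length)) (A := y.take (p'.length % y.length))
    (by rw [hul]; exact hg) (hYrot.trans hcb)
    (by rw [List.length_take, hul, hgeb]; omega)
  rw [List.take_append_drop] at hx1 hy1
  obtain ⟨t1, t2, e1, e2⟩ := rotpair (c.take (Nat.gcd x.length y.length)) j1 j2 hj1 hj2
  exact ⟨t1, t2, x.length / Nat.gcd x.length y.length, y.length / Nat.gcd x.length y.length,
    by rw [← e1]; exact hx1, by rw [← e2]; exact hy1⟩
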